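/- Semi-discrete entropy equality: consider the ODE system d/dt F_i = −(1/Δx)(f*_{i+1/2} − f*_{i−1/2}) where F_i = F(V_i(t)) and V_i is the entropy variable at cell i, with H a convex function of F whose gradient ∂_F H equals V. If each interface flux satisfies ⟨V_{i+1} − V_i, f*_{i+1/2}⟩ = χ_{i+1} − χ_i with χ_i = V_i · f(V_i) − h(V_i) evaluated at cell values, then d/dt H(F_i) = −(1/Δx)(h*_{i+1/2} − h*_{i−1/2}) where h*_{i±1/2} = ½(V_i + V_{i±1})·f*_{i±1/2} − ½(χ_i + χ_{i±1}). -/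

import Mathlib

open scoped RealInnerProductSpace

/-- Semi-discrete kinetic entropy equality: for the scheme
`d/dt F_i = −(1/Δx)(f*_{i+1/2} − f*_{i−1/2})` with `∂_F H = V_i` at each
cell, if each interface flux satisfies the entropy-conserving condition
`⟨V_{i+1} − V_i, f*_{i+1/2}⟩ = χ_{i+1} − χ_i` with
`χ_i = V_i·f(V_i) − h(V_i)`, then
`d/dt H(F_i) = −(1/Δx)(h*_{i+1/2} − h*_{i−1/2})` where
`h*_{i+1/2} = ½(V_i + V_{i+1})·f*_{i+1/2} − ½(χ_i + χ_{i+1})`. -/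
theorem stmt_9 {p : ℕ}
    (F : EuclideanSpace ℝ (Fin p) → EuclideanSpace ℝ (Fin p))
    (H : EuclideanSpace ℝ (Fin p) → ℝ)
    (f : EuclideanSpace ℝ (Fin p) → EuclideanSpace ℝ (Fin p))
    (h : EuclideanSpace ℝ (Fin p) → ℝ)
    (Δx : ℝ) (hΔx : 0 < Δx)
    (V : ℝ → ℤ → EuclideanSpace ℝ (Fin p))
    (fstar : ℝ → ℤ → EuclideanSpace ℝ (Fin p))
    -- ∂_F H evaluated at F(V_i) is the entropy variable V_i :
    (hgrad : ∀ t i, HasFDerivAt H ((innerSL ℝ) (V t i)) (F (V t i)))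
    -- the semi-discrete scheme (flux indexed by the cell to its left) :
    (hscheme : ∀ t i, HasDerivAt (fun s => F (V s i))
        ((-(1/Δx)) • (fstar t i - fstar t (i-1))) t)
    (χ : ℝ → ℤ → ℝ)
    (hχ : ∀ t i, χ t i = ⟪V t i, f (V t i)⟫ - h (V t i))
    -- kinetic entropy-conserving condition at each interface :
    (hEC : ∀ t i, ⟪V t (i+1) - V t i, fstar t i⟫ = χ t (i+1) - χ t i)
    (hstar : ℝ → ℤ → ℝ)
    (hhstar : ∀ t i, hstar t i =
        (1/2 : ℝ) * ⟪V t i + V t (i+1), fstar t i⟫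
          - (1/2) * (χ t i + χ t (i+1))) :
    ∀ t i, HasDerivAt (fun s => H (F (V s i)))
        ((-(1/Δx)) * (hstar t i - hstar t (i-1))) t := by
  intro t i
  have key : hstar t i - hstar t (i-1) = ⟪V t i, fstar t i - fstar t (i-1)⟫ := by
    have h1 := hEC t i
    have h2 := hEC t (i-1)
    simp only [sub_add_cancel] at h2
    have e1 : hstar t i = ⟪V t i, fstar t i⟫ - χ t i := by
      rw [hhstar t i]
      have : ⟪V t i + V t (i+1), fstar t i⟫
          = 2 * ⟪V t i, fstar t i⟫ + ⟪V t (i+1) - V t i, fstar t i⟫ := by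
        rw [inner_add_left, inner_sub_left]; ring
      rw [this, h1]; ring
    have e2 : hstar t (i-1) = ⟪V t i, fstar t (i-1)⟫ - χ t i := by
      rw [hhstar t (i-1)]; simp only [sub_add_cancel]
      have : ⟪V t (i-1) + V t i, fstar t (i-1)⟫
          = 2 * ⟪V t i, fstar t (i-1)⟫ - ⟪V t i - V t (i-1), fstar t (i-1)⟫ := by
        rw [inner_add_left, inner_sub_left]; ring
      rw [this, h2]; ring
    rw [e1, e2, inner_sub_right]; ring
  have hc := (hgrad t i).comp_hasDerivAt t (hscheme t i)
  refine HasDerivAt.congr_deriv hc ?_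
  simp only [innerSL_apply_apply, inner_smul_right]
  rw [key]
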